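/- There is an absolute constant C > 0 with the following property: for every integer d ≥ 0 and every ε ∈ (0,1/2), there exist real numbers ρ_0, …, ρ_d ∈ [0, 1−ε] and c_0, …, c_d ∈ ℝ such that (1) Σ_{j=0}^d c_j·ρ_j^k = 1 for every integer k with 0 ≤ k ≤ d; (2) 0 ≤ Σ_{j=0}^d c_j·ρ_j^k ≤ 1 for every integer k ≥ d+1; and (3) Σ_{j=0}^d |c_j| ≤ 2^{C·d·√ε}. -/

import Mathlib

open Finset Polynomial Real

lemma eval_nonneg_of_coeff_nonneg {p : ℝ[X]} (hp : ∀ n, 0 ≤ p.coeff n) {a : ℝ} (ha : 0 ≤ a) :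
    0 ≤ p.eval a := by
  rw [eval_eq_sum_range]
  exact Finset.sum_nonneg fun i _ => mul_nonneg (hp i) (pow_nonneg ha i)

lemma divByMonic_coeff_nonneg {p : ℝ[X]} {a : ℝ} (ha : 0 ≤ a) (hp : ∀ n, 0 ≤ p.coeff n) :
    ∀ n, 0 ≤ (p /ₘ (X - C a)).coeff n := by
  set q := p /ₘ (X - C a) with hq
  have hid : p = (X - C a) * q + C (p.eval a) := by
    conv_lhs => rw [← modByMonic_add_div p (X - C a)]
    rw [modByMonic_X_sub_C_eq_C_eval]
    ring
  have hrec : ∀ n, q.coeff n = p.coeff (n + 1) + a * q.coeff (n + 1) := by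
    intro n
    have := congrArg (fun r => Polynomial.coeff r (n + 1)) hid
    simp only [coeff_add, coeff_C, Nat.add_eq_zero, sub_mul, coeff_sub, coeff_X_mul,
      coeff_C_mul] at this
    simp only [Nat.succ_ne_zero, if_false, add_zero, and_false] at this
    linarith [this]
  have key : ∀ m n, q.natDegree < n + m → 0 ≤ q.coeff n := by
    intro m
    induction m with
    | zero => intro n hn; rw [coeff_eq_zero_of_natDegree_lt (by omega)]
    | succ m ih =>
      intro n hn
      rw [hrec n]
      exact add_nonneg (hp (n + 1)) (mul_nonneg ha (ih (n + 1) (by omega)))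
  intro n
  exact key (q.natDegree + 1) n (by omega)

lemma myT_natDegree_le (n : ℕ) : (Polynomial.Chebyshev.T ℝ (n : ℤ)).natDegree ≤ n := by
  induction n using Nat.twoStepInduction with
  | zero => simp [Polynomial.Chebyshev.T_zero]
  | one => simp [Polynomial.Chebyshev.T_one]
  | more n ih1 ih2 =>
    have h : ((n : ℤ) + 2) = ((n + 2 : ℕ) : ℤ) := by push_cast; ring
    rw [← h, Polynomial.Chebyshev.T_add_two]
    refine le_trans (natDegree_sub_le _ _) (max_le ?_ (by omega))
    refine le_trans (natDegree_mul_le) ?_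
    have h1 : (2 * X : ℝ[X]).natDegree ≤ 1 :=
      le_trans natDegree_mul_le (by simp)
    have h2 : ((n : ℤ) + 1) = ((n + 1 : ℕ) : ℤ) := by push_cast; ring
    rw [h2]
    omega

lemma myT_eval_add_inv (z : ℝ) (hz : z ≠ 0) (n : ℕ) :
    (Polynomial.Chebyshev.T ℝ (n : ℤ)).eval ((z + z⁻¹) / 2) = (z ^ n + (z ^ n)⁻¹) / 2 := by
  induction n using Nat.twoStepInduction with
  | zero => simp [Polynomial.Chebyshev.T_zero]
  | one => simp [Polynomial.Chebyshev.T_one]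
  | more n ih1 ih2 =>
    have h : ((n : ℤ) + 2) = ((n + 2 : ℕ) : ℤ) := by push_cast; ring
    have h2 : ((n : ℤ) + 1) = ((n + 1 : ℕ) : ℤ) := by push_cast; ring
    rw [← h, Polynomial.Chebyshev.T_add_two, h2]
    simp only [eval_sub, eval_mul, eval_X, eval_ofNat, ih1, ih2]
    have hz2 : z ^ n ≠ 0 := pow_ne_zero _ hz
    field_simp
    ring

lemma part2 {d k : ℕ} (x : ℕ → ℝ) (hx0 : ∀ m, 0 ≤ x m) (hx1 : ∀ m, x m < 1)
    (ρ : Fin (d + 1) → ℝ) (hρ : ∀ j : Fin (d + 1), ρ j = x j) (c : Fin (d + 1) → ℝ)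
    (hmaster : ∀ p : ℝ[X], p.degree < ((d + 1 : ℕ) : WithBot ℕ) →
      ∑ j, p.eval (ρ j) * c j = p.eval 1) :
    0 ≤ ∑ j, c j * ρ j ^ k ∧ ∑ j, c j * ρ j ^ k ≤ 1 := by
  set P : ℕ → ℝ[X] := fun m => Nat.rec ((X : ℝ[X]) ^ k) (fun m q => q /ₘ (X - C (x m))) m
    with hPdef
  have hP0 : P 0 = (X : ℝ[X]) ^ k := rfl
  have hPs : ∀ m, P (m + 1) = P m /ₘ (X - C (x m)) := fun _ => rfl
  have hPnn : ∀ m n, 0 ≤ (P m).coeff n := by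
    intro m
    induction m with
    | zero => intro n; rw [hP0, coeff_X_pow]; split <;> norm_num
    | succ m ih => rw [hPs]; exact divByMonic_coeff_nonneg (hx0 m) ih
  have hNewton : ∀ t, (X : ℝ[X]) ^ k =
      (∑ m ∈ Finset.range t, C ((P m).eval (x m)) * ∏ i ∈ Finset.range m, (X - C (x i))) +
        (∏ i ∈ Finset.range t, (X - C (x i))) * P t := by
    intro t
    induction t with
    | zero => simp [hP0]
    | succ t ih =>
      have hPt : P t = (X - C (x t)) * P (t + 1) + C ((P t).eval (x t)) := by
        conv_lhs => rw [← modByMonic_add_div (P t) (X - C (x t))]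
        rw [modByMonic_X_sub_C_eq_C_eval, hPs]
        ring
      rw [Finset.sum_range_succ, Finset.prod_range_succ, ih]
      conv_lhs => rw [hPt]
      ring
  have key := hNewton (d + 1)
  set N := ∑ m ∈ Finset.range (d + 1),
      C ((P m).eval (x m)) * ∏ i ∈ Finset.range m, (X - C (x i)) with hNdef
  have hNdeg : N.degree < ((d + 1 : ℕ) : WithBot ℕ) := by
    refine lt_of_le_of_lt (degree_sum_le _ _) ?_
    rw [Finset.sup_lt_iff (by exact_mod_cast WithBot.bot_lt_coe (d + 1))]
    intro m hm
    refine lt_of_le_of_lt (degree_mul_le _ _) ?_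
    have h2 : (∏ i ∈ Finset.range m, (X - C (x i))).natDegree = m := by
      rw [natDegree_prod _ _ (fun i _ => X_sub_C_ne_zero (x i))]
      simp [natDegree_X_sub_C]
    have h2' : (∏ i ∈ Finset.range m, (X - C (x i))).degree ≤ (m : WithBot ℕ) := by
      refine le_trans degree_le_natDegree ?_
      rw [h2]
    have hmd : m < d + 1 := Finset.mem_range.mp hm
    calc (C ((P m).eval (x m))).degree + (∏ i ∈ Finset.range m, (X - C (x i))).degree
        ≤ 0 + (m : WithBot ℕ) := add_le_add degree_C_le h2'
      _ = (m : WithBot ℕ) := zero_add _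
      _ < ((d + 1 : ℕ) : WithBot ℕ) := by exact_mod_cast hmd
  have hNeval : ∀ j : Fin (d + 1), N.eval (ρ j) = ρ j ^ k := by
    intro j
    have h := congrArg (Polynomial.eval (ρ j)) key
    rw [eval_pow, eval_X, eval_add, eval_mul, eval_prod] at h
    have hzero : ∏ i ∈ Finset.range (d + 1), Polynomial.eval (ρ j) (X - C (x i)) = 0 := by
      apply Finset.prod_eq_zero (Finset.mem_range.mpr j.isLt)
      rw [eval_sub, eval_X, eval_C, hρ j, sub_self]
    rw [hzero, zero_mul, add_zero] at h
    exact h.symm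
  have hsum : ∑ j, c j * ρ j ^ k = N.eval 1 := by
    rw [← hmaster N hNdeg]
    exact Finset.sum_congr rfl fun j _ => by rw [hNeval j, mul_comm]
  constructor
  · rw [hsum, hNdef, eval_finset_sum]
    apply Finset.sum_nonneg
    intro m _
    rw [eval_mul, eval_C, eval_prod]
    apply mul_nonneg (eval_nonneg_of_coeff_nonneg (hPnn m) (hx0 m))
    apply Finset.prod_nonneg
    intro i _
    rw [eval_sub, eval_X, eval_C]
    linarith [hx1 i]
  · rw [hsum]
    have h := congrArg (Polynomial.eval 1) key
    rw [eval_pow, eval_X, one_pow, eval_add] at h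
    have hnn : 0 ≤ Polynomial.eval 1 ((∏ i ∈ Finset.range (d + 1), (X - C (x i))) * P (d + 1)) := by
      rw [eval_mul, eval_prod]
      apply mul_nonneg
      · apply Finset.prod_nonneg
        intro i _
        rw [eval_sub, eval_X, eval_C]
        linarith [hx1 i]
      · exact eval_nonneg_of_coeff_nonneg (hPnn (d + 1)) zero_le_one
    linarith [h]


lemma part3 {d : ℕ} (hd : 1 ≤ d) {ε : ℝ} (hε : 0 < ε) (hε2 : ε < 1 / 2)
    (ρ c : Fin (d + 1) → ℝ)
    (hρ : ∀ j : Fin (d + 1), ρ j = (1 - ε) * (1 + Real.cos (j * π / d)) / 2)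
    (hc : ∀ j, c j = (Lagrange.basis univ ρ j).eval 1)
    (hanti' : ∀ i j : Fin (d + 1), i < j → ρ j < ρ i)
    (hx1 : ∀ j, ρ j < 1)
    (hmaster : ∀ p : ℝ[X], p.degree < ((d + 1 : ℕ) : WithBot ℕ) →
      ∑ j, p.eval (ρ j) * c j = p.eval 1) :
    ∑ j, |c j| ≤ (2 : ℝ) ^ ((15 : ℝ) * d * Real.sqrt ε) := by
  have hr0 : (0 : ℝ) < 1 - ε := by linarith
  have hr0' : (1 : ℝ) - ε ≠ 0 := ne_of_gt hr0
  have hd0 : (d : ℝ) ≠ 0 := Nat.cast_ne_zero.mpr (by omega)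
  -- Step A: |c j| = (-1)^j * c j
  have hsign : ∀ j : Fin (d + 1), |c j| = (-1 : ℝ) ^ (j : ℕ) * c j := by
    intro j
    set g : Fin (d + 1) → ℝ := fun i => (ρ j - ρ i)⁻¹ * (1 - ρ i) with hgdef
    have hcj : c j = ∏ i ∈ (univ : Finset (Fin (d + 1))).erase j, g i := by
      rw [hc j, Lagrange.basis, eval_prod]
      refine Finset.prod_congr rfl fun i _ => ?_
      simp [Lagrange.basisDivisor, hgdef]
    have hsplit : (univ : Finset (Fin (d + 1))).erase j = Finset.Iio j ∪ Finset.Ioi j := by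
      ext i
      simp only [Finset.mem_erase, Finset.mem_univ, and_true, Finset.mem_union,
        Finset.mem_Iio, Finset.mem_Ioi]
      exact ne_iff_lt_or_gt
    have hdisj : Disjoint (Finset.Iio j) (Finset.Ioi j) :=
      Finset.disjoint_left.mpr fun i h1 h2 =>
        absurd (Finset.mem_Iio.mp h1) (not_lt.mpr (le_of_lt (Finset.mem_Ioi.mp h2)))
    have hneg : ∀ i ∈ Finset.Iio j, g i = (-1) * (-(g i)) := fun i _ => by ring
    have hIio : ∏ i ∈ Finset.Iio j, g i = (-1 : ℝ) ^ (j : ℕ) * ∏ i ∈ Finset.Iio j, (-(g i)) := by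
      rw [Finset.prod_congr rfl hneg, Finset.prod_mul_distrib, Finset.prod_const, Fin.card_Iio]
    have hB1 : 0 ≤ ∏ i ∈ Finset.Iio j, (-(g i)) := by
      apply Finset.prod_nonneg
      intro i hi
      have hij : i < j := Finset.mem_Iio.mp hi
      have h1 : ρ j - ρ i < 0 := sub_neg.mpr (hanti' i j hij)
      have h2 : 0 < 1 - ρ i := by linarith [hx1 i]
      have : g i ≤ 0 := mul_nonpos_of_nonpos_of_nonneg (le_of_lt (inv_neg''.mpr h1)) h2.le
      linarith
    have hB2 : 0 ≤ ∏ i ∈ Finset.Ioi j, g i := by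
      apply Finset.prod_nonneg
      intro i hi
      have hij : j < i := Finset.mem_Ioi.mp hi
      have h1 : 0 < ρ j - ρ i := sub_pos.mpr (hanti' j i hij)
      have h2 : 0 < 1 - ρ i := by linarith [hx1 i]
      positivity
    have hcj2 : c j = (-1 : ℝ) ^ (j : ℕ) *
        ((∏ i ∈ Finset.Iio j, (-(g i))) * ∏ i ∈ Finset.Ioi j, g i) := by
      rw [hcj, hsplit, Finset.prod_union hdisj, hIio]
      ring
    have hBnn : 0 ≤ (∏ i ∈ Finset.Iio j, (-(g i))) * ∏ i ∈ Finset.Ioi j, g i :=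
      mul_nonneg hB1 hB2
    have hkey : (-1 : ℝ) ^ (j : ℕ) * c j =
        (∏ i ∈ Finset.Iio j, (-(g i))) * ∏ i ∈ Finset.Ioi j, g i := by
      rw [hcj2, ← mul_assoc, ← pow_add]
      rw [Even.neg_one_pow ⟨(j : ℕ), rfl⟩, one_mul]
    rw [← abs_of_nonneg (hkey ▸ hBnn : (0:ℝ) ≤ (-1 : ℝ) ^ (j : ℕ) * c j)]
    rw [abs_mul, abs_pow, abs_neg, abs_one, one_pow, one_mul]
  -- Step B: the scaled Chebyshev polynomial
  set p : ℝ[X] := (Polynomial.Chebyshev.T ℝ (d : ℤ)).comp (C (2 / (1 - ε)) * X - C 1) with hpdef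
  have hpdeg : p.degree < ((d + 1 : ℕ) : WithBot ℕ) := by
    have h1 : (C (2 / (1 - ε)) * X - C (1:ℝ)).natDegree ≤ 1 := by
      refine le_trans (natDegree_sub_le _ _) (max_le (le_trans (natDegree_C_mul_le _ _) ?_) ?_) <;> simp
    have h2 : p.natDegree ≤ d := by
      refine le_trans natDegree_comp_le ?_
      calc (Polynomial.Chebyshev.T ℝ (d : ℤ)).natDegree * (C (2 / (1 - ε)) * X - C (1:ℝ)).natDegree
          ≤ d * 1 := Nat.mul_le_mul (myT_natDegree_le d) h1
        _ = d := mul_one d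
    refine lt_of_le_of_lt degree_le_natDegree ?_
    exact_mod_cast Nat.lt_succ_of_le h2
  have hpnodes : ∀ j : Fin (d + 1), p.eval (ρ j) = (-1 : ℝ) ^ (j : ℕ) := by
    intro j
    rw [hpdef, eval_comp]
    have hinner : (C (2 / (1 - ε)) * X - C (1:ℝ)).eval (ρ j) = Real.cos (j * π / d) := by
      rw [eval_sub, eval_mul, eval_C, eval_X, eval_C, hρ j]
      field_simp
      ring
    rw [hinner, Polynomial.Chebyshev.T_real_cos]
    have harg : ((d : ℤ) : ℝ) * ((j : ℕ) * π / d) = (j : ℕ) * π := by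
      push_cast
      field_simp
    rw [harg]
    have := Real.cos_add_nat_mul_pi 0 (j : ℕ)
    simpa using this
  -- Step C
  have hsum : ∑ j, |c j| = p.eval 1 := by
    rw [← hmaster p hpdeg]
    refine Finset.sum_congr rfl fun j _ => ?_
    rw [hsign j, hpnodes j]
  -- Step D : evaluate p at 1
  set s : ℝ := Real.sqrt ε with hsdef
  have hs0 : 0 < s := Real.sqrt_pos.mpr hε
  have hs2 : s ^ 2 = ε := Real.sq_sqrt hε.le
  have hs1 : s < 1 := by nlinarith
  have h1s : (1 : ℝ) - s ≠ 0 := by intro h; nlinarith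
  have h1s' : (0:ℝ) < 1 - s := by nlinarith
  have h2s : (0:ℝ) < 1 + s := by linarith
  set z : ℝ := (1 + s) / (1 - s) with hzdef
  have hz0 : 0 < z := div_pos h2s h1s'
  have hz1 : 1 ≤ z := by
    rw [hzdef, le_div_iff₀ h1s']
    linarith
  have hone : (C (2 / (1 - ε)) * X - C (1:ℝ)).eval 1 = (z + z⁻¹) / 2 := by
    rw [eval_sub, eval_mul, eval_C, eval_X, eval_C, mul_one, hzdef]
    rw [inv_div]
    have hεs : ε = s ^ 2 := hs2.symm
    have hss : (1:ℝ) - s ^ 2 ≠ 0 := by nlinarith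
    rw [hεs]
    field_simp
    ring
  have hpeval : p.eval 1 = (z ^ d + (z ^ d)⁻¹) / 2 := by
    rw [hpdef, eval_comp, hone, myT_eval_add_inv z (ne_of_gt hz0) d]
  -- Step E : the bound
  have hzd1 : 1 ≤ z ^ d := by
    have := pow_le_pow_left₀ (by norm_num : (0:ℝ) ≤ 1) hz1 d
    simpa using this
  have h6 : (z ^ d + (z ^ d)⁻¹) / 2 ≤ z ^ d := by
    have : (z ^ d)⁻¹ ≤ 1 := inv_le_one_of_one_le₀ hzd1
    linarith
  have hs45 : s ≤ 4 / 5 := by nlinarith [sq_nonneg (s - 4 / 5)]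
  have hz10 : z ≤ 1 + 10 * s := by
    rw [hzdef, div_le_iff₀ h1s']
    nlinarith [mul_nonneg hs0.le (by linarith : (0:ℝ) ≤ 8 - 10 * s)]
  have hexp : 1 + 10 * s ≤ (2 : ℝ) ^ ((15 : ℝ) * s) := by
    rw [Real.rpow_def_of_pos (by norm_num : (0:ℝ) < 2)]
    have hlog := Real.log_two_gt_d9
    have := Real.add_one_le_exp (Real.log 2 * (15 * s))
    nlinarith [hs0.le]
  have hfinal : z ^ d ≤ (2 : ℝ) ^ ((15 : ℝ) * d * s) := by
    calc z ^ d ≤ ((2 : ℝ) ^ ((15 : ℝ) * s)) ^ d :=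
          pow_le_pow_left₀ hz0.le (le_trans hz10 hexp) d
      _ = (2 : ℝ) ^ ((15 : ℝ) * s * d) := by
          rw [← Real.rpow_natCast ((2 : ℝ) ^ ((15 : ℝ) * s)) d, ← Real.rpow_mul (by norm_num)]
      _ = (2 : ℝ) ^ ((15 : ℝ) * d * s) := by ring_nf
  rw [hsum, hpeval]
  exact le_trans h6 hfinal


theorem polynomial_approximation :
    ∃ C : ℝ, 0 < C ∧ ∀ (d : ℕ) (ε : ℝ), 0 < ε → ε < 1 / 2 →
      ∃ (ρ c : Fin (d + 1) → ℝ),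
        (∀ j, 0 ≤ ρ j ∧ ρ j ≤ 1 - ε) ∧
        (∀ k : ℕ, k ≤ d → ∑ j, c j * ρ j ^ k = 1) ∧
        (∀ k : ℕ, d + 1 ≤ k → 0 ≤ ∑ j, c j * ρ j ^ k ∧ ∑ j, c j * ρ j ^ k ≤ 1) ∧
        (∑ j, |c j| ≤ (2 : ℝ) ^ (C * d * Real.sqrt ε)) := by
  refine ⟨15, by norm_num, ?_⟩
  intro d ε hε hε2
  rcases Nat.eq_zero_or_pos d with hd | hd
  · subst hd
    refine ⟨fun _ => 0, fun _ => 1, fun j => ⟨le_refl _, by show (0:ℝ) ≤ 1 - ε; linarith⟩, ?_, ?_, ?_⟩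
    · intro k hk
      interval_cases k
      simp
    · intro k hk
      have : (0 : ℝ) ^ k = 0 := zero_pow (by omega)
      simp [this]
    · simp
  -- main case : d ≥ 1
  have hd0 : (d : ℝ) ≠ 0 := Nat.cast_ne_zero.mpr (by omega)
  have hdpos : (0 : ℝ) < d := by positivity
  set r : ℝ := 1 - ε with hrdef
  have hr0 : 0 < r := by simp only [hrdef]; linarith
  have hr1 : r < 1 := by simp only [hrdef]; linarith
  set x : ℕ → ℝ := fun m => r * (1 + Real.cos (m * π / d)) / 2 with hxdef
  have hx0 : ∀ m, 0 ≤ x m := by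
    intro m
    have := Real.neg_one_le_cos (m * π / d)
    simp only [hxdef]
    nlinarith
  have hxr : ∀ m, x m ≤ r := by
    intro m
    have := Real.cos_le_one (m * π / d)
    simp only [hxdef]
    nlinarith
  have hx1 : ∀ m, x m < 1 := fun m => lt_of_le_of_lt (hxr m) hr1
  have hanti : ∀ i j : ℕ, i < j → j ≤ d → x j < x i := by
    intro i j hij hjd
    have hcos : Real.cos (j * π / d) < Real.cos (i * π / d) := by
      apply Real.cos_lt_cos_of_nonneg_of_le_pi
      · positivity
      · rw [div_le_iff₀ hdpos]
        have : (j : ℝ) ≤ d := Nat.cast_le.mpr hjd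
        nlinarith [Real.pi_pos]
      · have hij' : (i : ℝ) < j := Nat.cast_lt.mpr hij
        have := Real.pi_pos
        gcongr
    simp only [hxdef]
    nlinarith
  set ρ : Fin (d + 1) → ℝ := fun j => x j with hρdef
  have hanti' : ∀ i j : Fin (d + 1), i < j → ρ j < ρ i := by
    intro i j hij
    exact hanti i j (Fin.lt_iff_val_lt_val.mp hij) (Fin.is_le j)
  have hinj : Set.InjOn ρ ↑(univ : Finset (Fin (d + 1))) := by
    intro a _ b _ hab
    by_contra hne
    rcases Ne.lt_or_gt hne with h | h
    · exact absurd hab (ne_of_gt (hanti' a b h))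
    · exact absurd hab (ne_of_lt (hanti' b a h))
  set c : Fin (d + 1) → ℝ := fun j => (Lagrange.basis univ ρ j).eval 1 with hcdef
  have hcards : #(univ : Finset (Fin (d + 1))) = d + 1 := by
    rw [Finset.card_univ, Fintype.card_fin]
  have hmaster : ∀ p : ℝ[X], p.degree < ((d + 1 : ℕ) : WithBot ℕ) →
      ∑ j, p.eval (ρ j) * c j = p.eval 1 := by
    intro p hp
    have := Lagrange.eq_interpolate hinj (by rw [hcards]; exact hp)
    conv_rhs => rw [this]
    rw [Lagrange.interpolate_apply, eval_finset_sum]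
    refine Finset.sum_congr rfl fun j _ => ?_
    rw [eval_mul, eval_C, hcdef]
  refine ⟨ρ, c, ?_, ?_, ?_, ?_⟩
  · exact fun j => ⟨hx0 j, hxr j⟩
  · -- (1) k ≤ d
    intro k hk
    have hdeg : ((X : ℝ[X]) ^ k).degree < ((d + 1 : ℕ) : WithBot ℕ) := by
      rw [degree_X_pow]
      exact_mod_cast Nat.lt_succ_of_le hk
    have := hmaster ((X : ℝ[X]) ^ k) hdeg
    simp only [eval_pow, eval_X, eval_pow, one_pow] at this
    rw [← this]
    exact Finset.sum_congr rfl fun j _ => mul_comm _ _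
  · -- (2) k ≥ d+1
    intro k _
    exact part2 x hx0 hx1 ρ (fun j => rfl) c hmaster
  · -- (3) coefficient bound
    exact part3 hd hε hε2 ρ c (fun j => rfl) (fun j => rfl) hanti' (fun j => hx1 j) hmaster
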